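/- Let G = (I, A, src, tgt, o, d) be a condensed DAG, β > 0, and let c : A → ℝ be arbitrary arc costs. Then there exists a unique function z : A → ℝ satisfying: z_a = c_a for every arc a with tgt(a) = d, and z_a = c_a − (1/β) ln( Σ_{a'∈A_{tgt(a)}^+} exp(−β z_{a'}) ) for every arc a with tgt(a) ≠ d. (Note that for every arc a with tgt(a) ≠ d, the set A_{tgt(a)}^+ is nonempty, since a lies on a route.) -/
import Mathlib


/-- A condensed DAG: finite node set `I`, finite arc set `A`, arc endpoint maps
`src, tgt : A → I`, distinct origin `o` and destination `d`, no directed cycles,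
and every arc lies on at least one route from `o` to `d`. -/
structure CondensedDAG (I : Type*) (A : Type*) [Fintype I] [Fintype A] where
  src : A → I
  tgt : A → I
  o : I
  d : I
  o_ne_d : o ≠ d
  /-- No directed cycle: there is no nonempty chain of consecutive arcs whose
  last arc's target is the first arc's source. -/
  acyclic : ∀ (a : A) (l : List A),
      List.Chain' (fun x y => tgt x = src y) (a :: l) →
      tgt ((a :: l).getLast (List.cons_ne_nil a l)) ≠ src a
  /-- Every arc lies on at least one route from `o` to `d`. -/
  covered : ∀ a : A, ∃ r : List A,
      (r ≠ [] ∧ (∀ b ∈ r.head?, src b = o) ∧ (∀ b ∈ r.getLast?, tgt b = d) ∧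
        List.Chain' (fun x y => tgt x = src y) r) ∧ a ∈ r

namespace CondensedDAG

variable {I A : Type*} [Fintype I] [Fintype A]

/-- A route: a nonempty list of consecutive arcs starting at `o` and ending at `d`. -/
def IsRoute (G : CondensedDAG I A) (r : List A) : Prop :=
  r ≠ [] ∧ (∀ b ∈ r.head?, G.src b = G.o) ∧ (∀ b ∈ r.getLast?, G.tgt b = G.d) ∧
    List.Chain' (fun x y => G.tgt x = G.src y) r

/-- The depth `ℓ_a` of an arc: the largest (1-based) position at which `a`
occurs in some route. -/
noncomputable def depth (G : CondensedDAG I A) (a : A) : ℕ :=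
  sSup {k : ℕ | 1 ≤ k ∧ ∃ r : List A, G.IsRoute r ∧ r[k - 1]? = some a}

/-- The depth `ℓ(G)` of the condensed DAG: maximal depth over all arcs. -/
noncomputable def graphDepth (G : CondensedDAG I A) : ℕ :=
  sSup (Set.range G.depth)

/-- The height `m_a` of an arc: the largest value of `|r| + 1 - ℓ_{a,r}` over
routes `r` containing `a` at (1-based) position `ℓ_{a,r}`. -/
noncomputable def height (G : CondensedDAG I A) (a : A) : ℕ :=
  sSup {k : ℕ | ∃ (r : List A) (j : ℕ), G.IsRoute r ∧ 1 ≤ j ∧ r[j - 1]? = some a ∧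
    k = r.length + 1 - j}

/-- The height `m(G)` of the condensed DAG: maximal height over all arcs. -/
noncomputable def graphHeight (G : CondensedDAG I A) : ℕ :=
  sSup (Set.range G.height)

end CondensedDAG

section Aux

variable {I A : Type*} [Fintype I] [Fintype A]

/-- `succRel G x y` means the arc `x` follows the arc `y`. -/
def succRel (G : CondensedDAG I A) (x y : A) : Prop := G.tgt y = G.src x

lemma succRel_transGen_chain (G : CondensedDAG I A) (b a : A)
    (h : Relation.TransGen (succRel G) b a) :
    ∃ l : List A, List.Chain' (fun x y => G.tgt x = G.src y) (a :: l) ∧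
      G.tgt ((a :: l).getLast (List.cons_ne_nil a l)) = G.src b := by
  induction h with
  | @single x h => exact ⟨[], List.isChain_singleton x, h⟩
  | @tail x y _ hxy ih =>
    obtain ⟨l, hc, hl⟩ := ih
    refine ⟨x :: l, ?_, ?_⟩
    · exact List.IsChain.cons_cons hxy hc
    · simpa [List.getLast_cons] using hl

lemma succRel_wf (G : CondensedDAG I A) : WellFounded (succRel G) := by
  have hirr : ∀ a, ¬ Relation.TransGen (succRel G) a a := by
    intro a h
    obtain ⟨l, hc, hl⟩ := succRel_transGen_chain G a a h
    exact G.acyclic a l hc hl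
  haveI : IsIrrefl A (Relation.TransGen (succRel G)) := ⟨hirr⟩
  haveI : IsTrans A (Relation.TransGen (succRel G)) :=
    ⟨fun _ _ _ h1 h2 => h1.trans h2⟩
  exact Subrelation.wf (fun h => Relation.TransGen.single h)
    (Finite.wellFounded_of_trans_of_irrefl _)

variable [DecidableEq I]

/-- The latency-to-go function defined by well-founded recursion. -/
noncomputable def ltg (G : CondensedDAG I A) (β : ℝ) (c : A → ℝ) : A → ℝ :=
  (succRel_wf G).fix (fun a ih =>
    if G.tgt a = G.d then c a
    else c a - (1 / β) * Real.log
      (∑ a' ∈ (Finset.univ.filter (fun a' => G.src a' = G.tgt a)).attach,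
        Real.exp (-β * ih a'.1 (by
          have := a'.2
          simp only [Finset.mem_filter, Finset.mem_univ, true_and] at this
          exact this.symm))))

lemma ltg_eq (G : CondensedDAG I A) (β : ℝ) (c : A → ℝ) (a : A) :
    ltg G β c a =
      if G.tgt a = G.d then c a
      else c a - (1 / β) * Real.log
        (∑ a' ∈ Finset.univ.filter (fun a' => G.src a' = G.tgt a),
          Real.exp (-β * ltg G β c a')) := by
  conv_lhs => rw [ltg, WellFounded.fix_eq]
  rw [← Finset.sum_attach (Finset.univ.filter (fun a' => G.src a' = G.tgt a))
    (fun a' => Real.exp (-β * ltg G β c a'))]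
  rfl

end Aux

/-- for arbitrary arc costs `c : A → ℝ` and `β > 0`, there is a
unique `z : A → ℝ` satisfying the latency-to-go recursion on a condensed DAG. -/
theorem latencyToGo_existsUnique
    {I A : Type*} [Fintype I] [Fintype A] [DecidableEq I]
    (G : CondensedDAG I A) (β : ℝ) (hβ : 0 < β) (c : A → ℝ) :
    ∃! z : A → ℝ,
      (∀ a : A, G.tgt a = G.d → z a = c a) ∧
      (∀ a : A, G.tgt a ≠ G.d →
        z a = c a - (1 / β) * Real.log
          (∑ a' ∈ Finset.univ.filter (fun a' => G.src a' = G.tgt a),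
            Real.exp (-β * z a'))) := by
  refine ⟨ltg G β c, ⟨?_, ?_⟩, ?_⟩
  · intro a ha
    rw [ltg_eq, if_pos ha]
  · intro a ha
    rw [ltg_eq, if_neg ha]
  · rintro z ⟨hz1, hz2⟩
    funext a
    induction a using (succRel_wf G).induction with
    | _ a ih =>
      by_cases ha : G.tgt a = G.d
      · rw [hz1 a ha, ltg_eq, if_pos ha]
      · have hs : (∑ a' ∈ Finset.univ.filter (fun a' => G.src a' = G.tgt a),
              Real.exp (-β * z a')) =
            ∑ a' ∈ Finset.univ.filter (fun a' => G.src a' = G.tgt a),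
              Real.exp (-β * ltg G β c a') := by
          apply Finset.sum_congr rfl
          intro a' ha'
          simp only [Finset.mem_filter, Finset.mem_univ, true_and] at ha'
          rw [ih a' ha'.symm]
        rw [hz2 a ha, hs, ltg_eq, if_neg ha]
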